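/- Let k be a natural number, let s be a real number with s > 2, and let a be a nonzero real number. Then ∫₁^∞ e^{iax} · (ln x)^k / x^s dx = −(ia/(k+1)) · ∫₁^∞ e^{iax} · (ln x)^{k+1} / x^{s−1} dx + ((s−1)/(k+1)) · ∫₁^∞ e^{iax} · (ln x)^{k+1} / x^s dx, all three integrals being absolutely convergent. -/

import Mathlib

open MeasureTheory Real Filter Set

-- continuity of the integrand away from 0
lemma aux_contAt (m : ℕ) (t a : ℝ) {x : ℝ} (hx : 0 < x) :
    ContinuousAt (fun x : ℝ => Complex.exp (Complex.I * (a : ℂ) * (x : ℂ)) *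
      ((Real.log x ^ m / x ^ t : ℝ) : ℂ)) x := by
  have hE : ContinuousAt (fun x : ℝ => Complex.exp (Complex.I * (a : ℂ) * (x : ℂ))) x := by
    fun_prop
  have hG : ContinuousAt (fun x : ℝ => Real.log x ^ m / x ^ t) x :=
    (((Real.continuousAt_log hx.ne').pow m).div
      (Real.continuousAt_rpow_const x t (Or.inl hx.ne')) (Real.rpow_pos_of_pos hx t).ne')
  exact hE.mul (Complex.continuous_ofReal.continuousAt.comp hG)

-- norm of the integrand
lemma aux_norm (m : ℕ) (t a : ℝ) {x : ℝ} (hx : 1 < x) :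
    ‖Complex.exp (Complex.I * (a : ℂ) * (x : ℂ)) *
      ((Real.log x ^ m / x ^ t : ℝ) : ℂ)‖ = Real.log x ^ m / x ^ t := by
  have h0 : (0:ℝ) < x := lt_trans one_pos hx
  have hlog : 0 ≤ Real.log x := Real.log_nonneg hx.le
  have h1 : ‖Complex.exp (Complex.I * (a : ℂ) * (x : ℂ))‖ = 1 := by
    rw [Complex.norm_exp]
    simp
  rw [norm_mul, h1, one_mul, Complex.norm_real, Real.norm_eq_abs, abs_of_nonneg (by positivity)]

-- pointwise bound
lemma aux_le (m : ℕ) {t t' : ℝ} (h : t' < t) {x : ℝ} (hx : 1 < x) :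
    Real.log x ^ m / x ^ t ≤ ((t - t') / (m + 1))⁻¹ ^ m * x ^ (-t') := by
  have h0 : (0:ℝ) < x := lt_trans one_pos hx
  set ε : ℝ := (t - t') / (m + 1) with hεdef
  have hε : 0 < ε := div_pos (sub_pos.2 h) (by positivity)
  have hlog : Real.log x ≤ x ^ ε / ε := Real.log_le_rpow_div h0.le hε
  have hlog0 : 0 ≤ Real.log x := Real.log_nonneg hx.le
  have h2 : Real.log x ^ m ≤ (x ^ ε / ε) ^ m := pow_le_pow_left₀ hlog0 hlog m
  have h3 : (x ^ ε / ε) ^ m = ε⁻¹ ^ m * x ^ (ε * m) := by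
    rw [div_pow, ← Real.rpow_natCast (x ^ ε) m, ← Real.rpow_mul h0.le]
    ring
  have h4 : x ^ (ε * m) ≤ x ^ (t - t') := by
    apply Real.rpow_le_rpow_of_exponent_le hx.le
    rw [hεdef]
    rw [div_mul_eq_mul_div]
    rw [div_le_iff₀ (by positivity)]
    nlinarith [sub_pos.2 h, (Nat.cast_nonneg m : (0:ℝ) ≤ m)]
  have h5 : Real.log x ^ m ≤ ε⁻¹ ^ m * x ^ (t - t') := by
    calc Real.log x ^ m ≤ (x ^ ε / ε) ^ m := h2
    _ = ε⁻¹ ^ m * x ^ (ε * m) := h3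
    _ ≤ ε⁻¹ ^ m * x ^ (t - t') := by
        exact mul_le_mul_of_nonneg_left h4 (by positivity)
  have hxt : (0:ℝ) < x ^ t := Real.rpow_pos_of_pos h0 t
  rw [div_le_iff₀ hxt]
  calc Real.log x ^ m ≤ ε⁻¹ ^ m * x ^ (t - t') := h5
  _ = ε⁻¹ ^ m * x ^ (-t') * x ^ t := by
      rw [mul_assoc, ← Real.rpow_add h0]; ring_nf

-- integrability
lemma aux_int (m : ℕ) {t : ℝ} (ht : 1 < t) (a : ℝ) :
    IntegrableOn (fun x : ℝ => Complex.exp (Complex.I * (a : ℂ) * (x : ℂ)) *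
      ((Real.log x ^ m / x ^ t : ℝ) : ℂ)) (Set.Ioi (1 : ℝ)) := by
  set t' : ℝ := (1 + t) / 2 with ht'def
  have ht'1 : 1 < t' := by rw [ht'def]; linarith
  have ht't : t' < t := by rw [ht'def]; linarith
  have hmeas : AEStronglyMeasurable (fun x : ℝ =>
      Complex.exp (Complex.I * (a : ℂ) * (x : ℂ)) *
      ((Real.log x ^ m / x ^ t : ℝ) : ℂ)) (volume.restrict (Set.Ioi (1:ℝ))) := by
    apply ContinuousOn.aestronglyMeasurable _ measurableSet_Ioi
    intro x hx
    exact (aux_contAt m t a (lt_trans one_pos hx)).continuousWithinAt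
  have hg : IntegrableOn
      (fun x : ℝ => ((t - t') / (m + 1))⁻¹ ^ m * x ^ (-t')) (Set.Ioi (1:ℝ)) :=
    (integrableOn_Ioi_rpow_of_lt (by linarith) one_pos).const_mul _
  refine Integrable.mono' hg hmeas ?_
  filter_upwards [ae_restrict_mem measurableSet_Ioi] with x hx
  rw [aux_norm m t a hx]
  exact aux_le m ht't hx

-- tendsto 0 at top
lemma aux_tendsto (m : ℕ) {r : ℝ} (hr : 0 < r) :
    Tendsto (fun x : ℝ => Real.log x ^ m * x ^ (-r)) atTop (nhds 0) := by
  have h := (isLittleO_log_rpow_rpow_atTop (m : ℝ) hr).tendsto_div_nhds_zero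
  apply h.congr'
  filter_upwards [eventually_gt_atTop (1:ℝ)] with x hx
  have h0 : (0:ℝ) < x := lt_trans one_pos hx
  rw [Real.rpow_natCast, div_eq_mul_inv, ← Real.rpow_neg h0.le]

/-- Contiguous relation: for `k ∈ ℕ`, real `s > 2` and real `a ≠ 0`,
`∫₁^∞ e^{iax} (ln x)^k / x^s dx
  = -(ia/(k+1)) ∫₁^∞ e^{iax} (ln x)^{k+1} / x^{s-1} dx
    + ((s-1)/(k+1)) ∫₁^∞ e^{iax} (ln x)^{k+1} / x^s dx`,
all three integrals being absolutely convergent. -/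
theorem integro_exponential_contiguous (k : ℕ) (s : ℝ) (hs : 2 < s) (a : ℝ) (ha : a ≠ 0) :
    IntegrableOn
      (fun x : ℝ => Complex.exp (Complex.I * (a : ℂ) * (x : ℂ)) *
        ((Real.log x ^ k / x ^ s : ℝ) : ℂ)) (Set.Ioi (1 : ℝ)) ∧
    IntegrableOn
      (fun x : ℝ => Complex.exp (Complex.I * (a : ℂ) * (x : ℂ)) *
        ((Real.log x ^ (k + 1) / x ^ (s - 1) : ℝ) : ℂ)) (Set.Ioi (1 : ℝ)) ∧
    IntegrableOn
      (fun x : ℝ => Complex.exp (Complex.I * (a : ℂ) * (x : ℂ)) *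
        ((Real.log x ^ (k + 1) / x ^ s : ℝ) : ℂ)) (Set.Ioi (1 : ℝ)) ∧
    (∫ x in Set.Ioi (1 : ℝ),
        Complex.exp (Complex.I * (a : ℂ) * (x : ℂ)) *
          ((Real.log x ^ k / x ^ s : ℝ) : ℂ)) =
      -(Complex.I * (a : ℂ) / ((k : ℂ) + 1)) *
          (∫ x in Set.Ioi (1 : ℝ),
            Complex.exp (Complex.I * (a : ℂ) * (x : ℂ)) *
              ((Real.log x ^ (k + 1) / x ^ (s - 1) : ℝ) : ℂ)) +
        (((s : ℂ) - 1) / ((k : ℂ) + 1)) *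
          ∫ x in Set.Ioi (1 : ℝ),
            Complex.exp (Complex.I * (a : ℂ) * (x : ℂ)) *
              ((Real.log x ^ (k + 1) / x ^ s : ℝ) : ℂ) := by
  have h0 : IntegrableOn
      (fun x : ℝ => Complex.exp (Complex.I * (a : ℂ) * (x : ℂ)) *
        ((Real.log x ^ k / x ^ s : ℝ) : ℂ)) (Set.Ioi (1 : ℝ)) :=
    aux_int k (by linarith) a
  have h2 : IntegrableOn
      (fun x : ℝ => Complex.exp (Complex.I * (a : ℂ) * (x : ℂ)) *
        ((Real.log x ^ (k + 1) / x ^ (s - 1) : ℝ) : ℂ)) (Set.Ioi (1 : ℝ)) :=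
    aux_int (k + 1) (by linarith) a
  have h3 : IntegrableOn
      (fun x : ℝ => Complex.exp (Complex.I * (a : ℂ) * (x : ℂ)) *
        ((Real.log x ^ (k + 1) / x ^ s : ℝ) : ℂ)) (Set.Ioi (1 : ℝ)) :=
    aux_int (k + 1) (by linarith) a
  refine ⟨h0, h2, h3, ?_⟩
  set E : ℝ → ℂ := fun x => Complex.exp (Complex.I * (a : ℂ) * (x : ℂ)) with hE
  set f0 : ℝ → ℂ := fun x => E x * ((Real.log x ^ k / x ^ s : ℝ) : ℂ) with hf0
  set f2 : ℝ → ℂ := fun x => E x * ((Real.log x ^ (k + 1) / x ^ (s - 1) : ℝ) : ℂ) with hf2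
  set f3 : ℝ → ℂ := fun x => E x * ((Real.log x ^ (k + 1) / x ^ s : ℝ) : ℂ) with hf3
  set F : ℝ → ℂ := fun x => E x * ((Real.log x ^ (k + 1) * x ^ (-(s - 1)) : ℝ) : ℂ) with hF
  set F' : ℝ → ℂ := fun x => Complex.I * (a : ℂ) * f2 x +
    ((((k : ℂ) + 1) * f0 x) - (((s : ℂ) - 1) * f3 x)) with hF'
  -- derivative
  have hderiv : ∀ x ∈ Set.Ioi (1 : ℝ), HasDerivAt F (F' x) x := by
    intro x hx
    have hx1 : (1:ℝ) < x := hx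
    have hx0 : (0:ℝ) < x := lt_trans one_pos hx1
    have hB : x⁻¹ * x ^ (-(s - 1)) = (x ^ s)⁻¹ := by
      rw [← Real.rpow_neg_one x, ← Real.rpow_add hx0, ← Real.rpow_neg hx0.le]
      congr 1; ring
    have hC : x ^ (-(s - 1) - 1) = (x ^ s)⁻¹ := by
      rw [← Real.rpow_neg hx0.le]
      congr 1; ring
    have hA : x ^ (-(s - 1)) = (x ^ (s - 1))⁻¹ := Real.rpow_neg hx0.le _
    have hEx : HasDerivAt E (Complex.I * (a : ℂ) * E x) x := by
      have h1 : HasDerivAt (fun y : ℝ => Complex.I * (a : ℂ) * (y : ℂ))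
          (Complex.I * (a : ℂ)) x := by
        simpa using (Complex.ofRealCLM.hasDerivAt (x := x)).const_mul (Complex.I * (a : ℂ))
      have h2' := h1.cexp
      rw [hE]
      convert h2' using 1
      ring
    have hpow : HasDerivAt (fun y : ℝ => Real.log y ^ (k + 1))
        ((k + 1 : ℕ) * Real.log x ^ k * x⁻¹) x := by
      exact ((Real.hasDerivAt_log hx0.ne').pow (k + 1)).congr_deriv (by simp)
    have hr : HasDerivAt (fun y : ℝ => y ^ (-(s - 1)))
        ((-(s - 1)) * x ^ (-(s - 1) - 1)) x :=
      Real.hasDerivAt_rpow_const (Or.inl hx0.ne')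
    have hG : HasDerivAt (fun y : ℝ => Real.log y ^ (k + 1) * y ^ (-(s - 1)))
        ((k + 1) * (Real.log x ^ k / x ^ s) - (s - 1) * (Real.log x ^ (k + 1) / x ^ s)) x := by
      refine (hpow.mul hr).congr_deriv ?_
      rw [div_eq_mul_inv, div_eq_mul_inv, hC,
        mul_assoc ((((k : ℕ) + 1 : ℕ) : ℝ) * Real.log x ^ k) x⁻¹ (x ^ (-(s - 1))), hB]
      push_cast
      ring
    have hFx : HasDerivAt F (Complex.I * (a : ℂ) * E x *
        ((Real.log x ^ (k + 1) * x ^ (-(s - 1)) : ℝ) : ℂ) +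
        E x * (((k + 1) * (Real.log x ^ k / x ^ s)
          - (s - 1) * (Real.log x ^ (k + 1) / x ^ s) : ℝ) : ℂ)) x :=
      hEx.mul hG.ofReal_comp
    convert hFx using 1
    rw [hF', hf0, hf2, hf3]
    have hA2 : (Real.log x ^ (k + 1) * x ^ (-(s - 1)) : ℝ)
        = Real.log x ^ (k + 1) / x ^ (s - 1) := by
      rw [hA, div_eq_mul_inv]
    rw [hA2]
    push_cast
    ring
  -- continuity at the left endpoint
  have hcont : ContinuousWithinAt F (Set.Ici (1 : ℝ)) 1 := by
    apply ContinuousAt.continuousWithinAt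
    have hEc : ContinuousAt E 1 := by rw [hE]; fun_prop
    have hGc : ContinuousAt (fun x : ℝ => Real.log x ^ (k + 1) * x ^ (-(s - 1))) 1 :=
      ((Real.continuousAt_log one_ne_zero).pow _).mul
        (Real.continuousAt_rpow_const 1 _ (Or.inl one_ne_zero))
    exact hEc.mul (Complex.continuous_ofReal.continuousAt.comp hGc)
  -- limit at infinity
  have htend : Tendsto F atTop (nhds (0 : ℂ)) := by
    refine squeeze_zero_norm'
      (a := fun x : ℝ => Real.log x ^ (k + 1) * x ^ (-(s - 1))) ?_
      (aux_tendsto (k + 1) (by linarith))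
    · filter_upwards [eventually_gt_atTop (1 : ℝ)] with x hx
      have hx0 : (0:ℝ) < x := lt_trans one_pos hx
      have h1 : ‖E x‖ = 1 := by
        rw [hE]; rw [Complex.norm_exp]; simp
      rw [hF, norm_mul, h1, one_mul, Complex.norm_real, Real.norm_eq_abs]
      have : 0 ≤ Real.log x ^ (k + 1) * x ^ (-(s - 1)) := by
        have := Real.log_nonneg hx.le
        positivity
      rw [abs_of_nonneg this]
  -- F' integrable
  have hF'int : IntegrableOn F' (Set.Ioi (1 : ℝ)) :=
    (h2.const_mul _).add ((h0.const_mul _).sub (h3.const_mul _))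
  have key : ∫ x in Set.Ioi (1 : ℝ), F' x = 0 - F 1 :=
    integral_Ioi_of_hasDerivAt_of_tendsto hcont hderiv hF'int htend
  have hF1 : F 1 = 0 := by
    rw [hF]; simp [Real.log_one]
  rw [hF1, sub_zero] at key
  have hsplit : ∫ x in Set.Ioi (1 : ℝ), F' x =
      Complex.I * (a : ℂ) * (∫ x in Set.Ioi (1 : ℝ), f2 x) +
      ((((k : ℂ) + 1) * ∫ x in Set.Ioi (1 : ℝ), f0 x)
        - (((s : ℂ) - 1) * ∫ x in Set.Ioi (1 : ℝ), f3 x)) := by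
    rw [hF']
    have i23 : IntegrableOn
        (fun x => (((k : ℂ) + 1) * f0 x) - (((s : ℂ) - 1) * f3 x)) (Set.Ioi (1:ℝ)) :=
      (h0.const_mul _).sub (h3.const_mul _)
    have i0 : IntegrableOn (fun x => ((k : ℂ) + 1) * f0 x) (Set.Ioi (1:ℝ)) := h0.const_mul _
    have i3 : IntegrableOn (fun x => ((s : ℂ) - 1) * f3 x) (Set.Ioi (1:ℝ)) := h3.const_mul _
    rw [integral_add (h2.const_mul _) i23, integral_sub i0 i3,
      integral_const_mul, integral_const_mul, integral_const_mul]
  rw [hsplit] at key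
  have hk : ((k : ℂ) + 1) ≠ 0 := Nat.cast_add_one_ne_zero k
  apply mul_left_cancel₀ hk
  have hrhs : ((k : ℂ) + 1) *
      (-(Complex.I * (a : ℂ) / ((k : ℂ) + 1)) * (∫ x in Set.Ioi (1:ℝ), f2 x) +
        (((s : ℂ) - 1) / ((k : ℂ) + 1)) * ∫ x in Set.Ioi (1:ℝ), f3 x) =
      -(Complex.I * (a : ℂ)) * (∫ x in Set.Ioi (1:ℝ), f2 x) +
        ((s : ℂ) - 1) * ∫ x in Set.Ioi (1:ℝ), f3 x := by
    field_simp
  rw [hrhs]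
  linear_combination key
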